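/- Let c > 1 be a rational number and let γ_c : ℝ → ℝ² be the hypocycloid parametrization γ_c(φ) = ((c-1)·cos φ + cos((c-1)φ), (c-1)·sin φ − sin((c-1)φ)). If φ ≥ 0 is such that the arclength s = ∫₀^φ ‖γ_c'(ψ)‖ dψ is a rational number, then the squared polar radius ‖γ_c(φ)‖² is rational. In particular, for every positive integer n and every 1 ≤ k ≤ n, the squared polar radius of the k-th n-division point of the c-hypocycloid (the point at arclength k·ϖ_c/n from γ_c(0), where ϖ_c = 8b(c−1) is the total arclength and b is the denominator of c in lowest terms) is a rational number. -/

import Mathlib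

open Real

lemma abs_sin_add_nat_pi (k : ℕ) (u : ℝ) : |Real.sin (u + k * π)| = |Real.sin u| := by
  rw [Real.sin_add_nat_mul_pi, abs_mul, abs_pow, abs_neg, abs_one, one_pow, one_mul]

lemma neg_one_pow_sq (k : ℕ) : ((-1:ℝ))^k * (-1:ℝ)^k = 1 := by
  rw [← pow_add, ← two_mul, pow_mul]; norm_num

lemma integral_abs_sin_nat (k : ℕ) : ∫ u in (0:ℝ)..(k*π), |Real.sin u| = 2*k := by
  induction k with
  | zero => simp
  | succ k ih =>
    have hint : ∀ a b : ℝ, IntervalIntegrable (fun u => |Real.sin u|) MeasureTheory.volume a b :=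
      fun a b => (Real.continuous_sin.abs).intervalIntegrable a b
    have hsplit := intervalIntegral.integral_add_adjacent_intervals (a := (0:ℝ)) (b := k*π)
      (c := (k+1)*π) (hint 0 (k*π)) (hint (k*π) ((k+1)*π))
    have h2 : ∫ u in (k*π:ℝ)..((k+1)*π), |Real.sin u| = 2 := by
      have := intervalIntegral.integral_comp_add_right (a := (0:ℝ)) (b := π)
        (fun u => |Real.sin u|) (k*π)
      rw [zero_add] at this
      have heq : π + (k:ℝ)*π = (k+1)*π := by ring
      rw [heq] at this
      rw [← this]
      simp_rw [abs_sin_add_nat_pi k]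
      have hcongr : ∫ u in (0:ℝ)..π, |Real.sin u| = ∫ u in (0:ℝ)..π, Real.sin u := by
        apply intervalIntegral.integral_congr
        intro u hu
        rw [Set.uIcc_of_le Real.pi_nonneg] at hu
        exact abs_of_nonneg (Real.sin_nonneg_of_nonneg_of_le_pi hu.1 hu.2)
      rw [hcongr, integral_sin, Real.cos_zero, Real.cos_pi]; ring
    push_cast
    rw [← hsplit, ih, h2]; ring

lemma integral_abs_sin (t : ℝ) (ht : 0 ≤ t) :
    ∫ u in (0:ℝ)..t, |Real.sin u| =
      2*(⌊t/π⌋.toNat : ℝ) + 1 - (-1)^(⌊t/π⌋.toNat) * Real.cos t := by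
  set k := ⌊t/π⌋.toNat with hk
  have hπ : (0:ℝ) < π := Real.pi_pos
  have hkk : (⌊t/π⌋ : ℤ) = (k : ℤ) := by
    rw [hk, Int.toNat_of_nonneg (Int.floor_nonneg.2 (div_nonneg ht hπ.le))]
  have h1 : (k:ℝ) * π ≤ t := by
    have h := Int.floor_le (t/π)
    rw [hkk] at h
    have h' : (k:ℝ) ≤ t/π := by exact_mod_cast h
    calc (k:ℝ) * π ≤ (t/π) * π := by nlinarith
    _ = t := by field_simp
  have h2 : t ≤ ((k:ℝ)+1) * π := by
    have h := (Int.lt_floor_add_one (t/π)).le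
    rw [hkk] at h
    have h' : t/π ≤ (k:ℝ)+1 := by exact_mod_cast h
    calc t = (t/π) * π := by field_simp
    _ ≤ ((k:ℝ)+1) * π := by nlinarith
  have hint : ∀ a b : ℝ, IntervalIntegrable (fun u => |Real.sin u|) MeasureTheory.volume a b :=
    fun a b => (Real.continuous_sin.abs).intervalIntegrable a b
  have hsplit := intervalIntegral.integral_add_adjacent_intervals (a := (0:ℝ)) (b := k*π)
    (c := t) (hint 0 (k*π)) (hint (k*π) t)
  rw [← hsplit, integral_abs_sin_nat]
  have htail : ∫ u in ((k:ℝ)*π)..t, |Real.sin u| = (-1)^k * (Real.cos (k*π) - Real.cos t) := by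
    have hcongr : ∫ u in ((k:ℝ)*π)..t, |Real.sin u|
        = ∫ u in ((k:ℝ)*π)..t, (-1)^k * Real.sin u := by
      apply intervalIntegral.integral_congr
      intro u hu
      rw [Set.uIcc_of_le h1] at hu
      simp only
      have hs := Real.sin_add_nat_mul_pi (u - k*π) k
      rw [sub_add_cancel] at hs
      have hnn : 0 ≤ Real.sin (u - k*π) := by
        apply Real.sin_nonneg_of_nonneg_of_le_pi <;> nlinarith [hu.1, hu.2]
      rw [hs, ← mul_assoc, neg_one_pow_sq, one_mul, abs_mul, abs_pow, abs_neg, abs_one,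
        one_pow, one_mul, abs_of_nonneg hnn]
    rw [hcongr, intervalIntegral.integral_const_mul, integral_sin]
  rw [htail]
  have hcos : Real.cos ((k:ℝ)*π) = (-1)^k := by
    have := Real.cos_add_nat_mul_pi 0 k
    simpa using this
  rw [hcos, mul_sub, neg_one_pow_sq]
  ring

lemma hypo_hasDerivAt (c : ℝ) (γ : ℝ → EuclideanSpace ℝ (Fin 2))
    (hγ : ∀ φ : ℝ, γ φ =
      ![(c - 1) * Real.cos φ + Real.cos ((c - 1) * φ),
        (c - 1) * Real.sin φ - Real.sin ((c - 1) * φ)]) (ψ : ℝ) :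
    HasDerivAt γ ((EuclideanSpace.equiv (Fin 2) ℝ).symm
      ![-((c-1) * Real.sin ψ) - (c-1) * Real.sin ((c-1)*ψ),
        (c-1) * Real.cos ψ - (c-1) * Real.cos ((c-1)*ψ)]) ψ := by
  have hγ' : γ = fun φ => (EuclideanSpace.equiv (Fin 2) ℝ).symm
      ![(c - 1) * Real.cos φ + Real.cos ((c - 1) * φ),
        (c - 1) * Real.sin φ - Real.sin ((c - 1) * φ)] := by
    funext φ; rw [← hγ]; rfl
  rw [hγ']
  apply ((EuclideanSpace.equiv (Fin 2) ℝ).symm.toContinuousLinearMap.hasFDerivAt).comp_hasDerivAt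
  rw [hasDerivAt_pi]
  have hm : HasDerivAt (fun x : ℝ => (c-1)*x) (c-1) ψ := by
    simpa using (hasDerivAt_id ψ).const_mul (c-1)
  intro i
  fin_cases i <;> simp only [Fin.zero_eta, Fin.mk_one, Matrix.cons_val_zero, Matrix.cons_val_one, Matrix.head_cons]
  · have ha := (Real.hasDerivAt_cos ψ).const_mul (c-1)
    have hb := (Real.hasDerivAt_cos ((c-1)*ψ)).comp ψ hm
    convert ha.add hb using 1
    · rfl
    ring
  · have ha := (Real.hasDerivAt_sin ψ).const_mul (c-1)
    have hb := (Real.hasDerivAt_sin ((c-1)*ψ)).comp ψ hm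
    convert ha.sub hb using 1
    · rfl
    ring

lemma hypo_norm_deriv (c : ℝ) (hc : 1 < c) (γ : ℝ → EuclideanSpace ℝ (Fin 2))
    (hγ : ∀ φ : ℝ, γ φ =
      ![(c - 1) * Real.cos φ + Real.cos ((c - 1) * φ),
        (c - 1) * Real.sin φ - Real.sin ((c - 1) * φ)]) (ψ : ℝ) :
    ‖deriv γ ψ‖ = 2*(c-1)*|Real.sin (c*ψ/2)| := by
  rw [(hypo_hasDerivAt c γ hγ ψ).deriv]
  rw [EuclideanSpace.norm_eq, Fin.sum_univ_two]
  have e0 : (EuclideanSpace.equiv (Fin 2) ℝ).symm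
      ![-((c-1) * Real.sin ψ) - (c-1) * Real.sin ((c-1)*ψ),
        (c-1) * Real.cos ψ - (c-1) * Real.cos ((c-1)*ψ)] 0
      = -((c-1) * Real.sin ψ) - (c-1) * Real.sin ((c-1)*ψ) := rfl
  have e1 : (EuclideanSpace.equiv (Fin 2) ℝ).symm
      ![-((c-1) * Real.sin ψ) - (c-1) * Real.sin ((c-1)*ψ),
        (c-1) * Real.cos ψ - (c-1) * Real.cos ((c-1)*ψ)] 1
      = (c-1) * Real.cos ψ - (c-1) * Real.cos ((c-1)*ψ) := rfl
  rw [e0, e1, Real.norm_eq_abs, Real.norm_eq_abs, sq_abs, sq_abs]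
  have key : (-((c-1) * Real.sin ψ) - (c-1) * Real.sin ((c-1)*ψ))^2
      + ((c-1) * Real.cos ψ - (c-1) * Real.cos ((c-1)*ψ))^2
      = (2*(c-1)*|Real.sin (c*ψ/2)|)^2 := by
    rw [mul_pow, mul_pow, sq_abs]
    have hpy1 := Real.sin_sq_add_cos_sq ψ
    have hpy2 := Real.sin_sq_add_cos_sq ((c-1)*ψ)
    have hadd : Real.cos (c*ψ) = Real.cos ψ * Real.cos ((c-1)*ψ) - Real.sin ψ * Real.sin ((c-1)*ψ) := by
      rw [← Real.cos_add]; ring_nf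
    have hdbl : Real.cos (c*ψ) = 1 - 2 * Real.sin (c*ψ/2)^2 := by
      have h1 := Real.cos_two_mul (c*ψ/2)
      have h2 := Real.sin_sq_add_cos_sq (c*ψ/2)
      rw [show 2*(c*ψ/2) = c*ψ by ring] at h1
      nlinarith
    nlinarith [hadd, hdbl]
  rw [key, Real.sqrt_sq (by nlinarith [abs_nonneg (Real.sin (c*ψ/2))])]

/-- For a rational `c > 1`, if a point of the `c`-hypocycloid is at rational
arclength `s` from the base point, then its squared polar radius is rational.
In particular, the squared polar radius of each `k`-th `n`-division point
(at arclength `k·ϖ_c/n`, where `ϖ_c = 8b(c−1)` with `b` the denominator of `c`)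
is rational. -/
theorem hypocycloid_division_points_polar_radius_sq_rational (c : ℚ) (hc : 1 < c)
    (γ : ℝ → EuclideanSpace ℝ (Fin 2))
    (hγ : ∀ φ : ℝ, γ φ =
      ![((c : ℝ) - 1) * Real.cos φ + Real.cos (((c : ℝ) - 1) * φ),
        ((c : ℝ) - 1) * Real.sin φ - Real.sin (((c : ℝ) - 1) * φ)]) :
    (∀ φ : ℝ, 0 ≤ φ → (∃ q : ℚ, (∫ ψ in (0 : ℝ)..φ, ‖deriv γ ψ‖) = (q : ℝ)) →
      ∃ q : ℚ, ‖γ φ‖ ^ 2 = (q : ℝ)) ∧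
    (∀ n k : ℕ, 0 < n → 1 ≤ k → k ≤ n → ∀ φ : ℝ, 0 ≤ φ →
      (∫ ψ in (0 : ℝ)..φ, ‖deriv γ ψ‖) =
        (k : ℝ) * (8 * (c.den : ℝ) * ((c : ℝ) - 1)) / (n : ℝ) →
      ∃ q : ℚ, ‖γ φ‖ ^ 2 = (q : ℝ)) := by
  obtain ⟨r, hrdef⟩ : ∃ r : ℝ, r = (c:ℝ) := ⟨_, rfl⟩
  have hr : (1:ℝ) < r := by rw [hrdef]; exact_mod_cast hc
  have hγ' : ∀ φ : ℝ, γ φ =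
      ![(r - 1) * Real.cos φ + Real.cos ((r - 1) * φ),
        (r - 1) * Real.sin φ - Real.sin ((r - 1) * φ)] := by
    rw [hrdef]; exact hγ
  have hr0 : r ≠ 0 := by linarith
  have hr1 : r - 1 ≠ 0 := by linarith
  have main : ∀ φ : ℝ, 0 ≤ φ →
      (∃ q : ℚ, (∫ ψ in (0 : ℝ)..φ, ‖deriv γ ψ‖) = (q : ℝ)) →
      ∃ q : ℚ, ‖γ φ‖ ^ 2 = (q : ℝ) := by
    intro φ hφ ⟨q, hq⟩
    -- rewrite the arclength integral
    have hnorm : ∀ ψ : ℝ, ‖deriv γ ψ‖ = 2*(r-1)*|Real.sin ((r/2)*ψ)| := by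
      intro ψ
      rw [hypo_norm_deriv r hr γ hγ' ψ]
      congr 2
      ring
    set t : ℝ := (r/2)*φ with htdef
    have ht : 0 ≤ t := by
      have : 0 ≤ r/2 := by linarith
      exact mul_nonneg this hφ
    set k : ℕ := ⌊t/π⌋.toNat with hkdef
    have hX : ((-1:ℝ))^k * (-1:ℝ)^k = 1 := neg_one_pow_sq k
    have hE : 2*(r-1) * ((r/2)⁻¹ * (2*(k:ℝ)+1 - (-1)^k * Real.cos t)) = (q:ℝ) := by
      rw [← hq]
      simp_rw [hnorm]
      rw [intervalIntegral.integral_const_mul]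
      congr 1
      have hsub := intervalIntegral.integral_comp_mul_left (a := (0:ℝ)) (b := φ)
        (fun u => |Real.sin u|) (c := r/2) (by positivity)
      rw [hsub, mul_zero, smul_eq_mul]
      congr 1
      rw [← htdef, integral_abs_sin t ht, ← hkdef]
    clear_value k
    -- solve for cos t
    have hA : 2*(k:ℝ)+1 - (-1)^k * Real.cos t = (q:ℝ)*r/(4*(r-1)) := by
      field_simp at hE ⊢
      linear_combination hE
    have hcost : Real.cos t = (-1)^k * (2*(k:ℝ)+1 - (q:ℝ)*r/(4*(r-1))) := by
      linear_combination (-((-1:ℝ)^k))*hA - Real.cos t * hX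
    have hcast : Real.cos t = (((-1)^k * (2*(k:ℚ)+1 - q*c/(4*(c-1))) : ℚ) : ℝ) := by
      rw [hcost, hrdef]
      push_cast
      ring
    -- the squared norm
    set q1 : ℚ := (-1)^k * (2*(k:ℚ)+1 - q*c/(4*(c-1))) with hq1def
    clear_value q1
    refine ⟨(c-1)^2 + 1 + 2*(c-1)*(2*q1^2 - 1), ?_⟩
    have hq2 : (((c-1)^2 + 1 + 2*(c-1)*(2*q1^2 - 1) : ℚ) : ℝ)
        = (r-1)^2 + 1 + 2*(r-1)*(2*(q1:ℝ)^2 - 1) := by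
      rw [hrdef]
      push_cast
      ring
    have hA0 : (γ φ) 0 = (r-1) * Real.cos φ + Real.cos ((r-1)*φ) := by rw [hγ']; rfl
    have hA1 : (γ φ) 1 = (r-1) * Real.sin φ - Real.sin ((r-1)*φ) := by rw [hγ']; rfl
    have hnormsq : ‖γ φ‖^2 = ((r-1) * Real.cos φ + Real.cos ((r-1)*φ))^2
        + ((r-1) * Real.sin φ - Real.sin ((r-1)*φ))^2 := by
      rw [EuclideanSpace.norm_eq, Fin.sum_univ_two, hA0, hA1, Real.norm_eq_abs,
        Real.norm_eq_abs, sq_abs, sq_abs]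
      exact Real.sq_sqrt (by positivity)
    clear_value t
    clear hq hE hnorm hA hcost hq1def hkdef hγ hγ' hA0 hA1
    have hcos2 : Real.cos (r*φ) = 2 * Real.cos t ^ 2 - 1 := by
      rw [htdef, ← Real.cos_two_mul]
      congr 1
      ring
    have hadd : Real.cos (r*φ) = Real.cos φ * Real.cos ((r-1)*φ)
        - Real.sin φ * Real.sin ((r-1)*φ) := by
      rw [← Real.cos_add]; ring_nf
    have hpy1 := Real.sin_sq_add_cos_sq φ
    have hpy2 := Real.sin_sq_add_cos_sq ((r-1)*φ)
    have hval : ((r-1) * Real.cos φ + Real.cos ((r-1)*φ))^2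
        + ((r-1) * Real.sin φ - Real.sin ((r-1)*φ))^2
        = (r-1)^2 + 1 + 2*(r-1)*(2*(q1:ℝ)^2 - 1) := by
      rw [← hcast, ← hcos2]
      nlinarith [hadd]
    rw [hnormsq, hval, hq2]
  refine ⟨main, fun n k hn hk1 hk2 φ hφ hs => main φ hφ ⟨(k:ℚ)*(8*(c.den:ℚ)*(c-1))/(n:ℚ), ?_⟩⟩
  rw [hs]
  push_cast
  ring
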